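/- Let X_1, …, X_n be i.i.d. random points in R^d with common distribution P, let T ⊂ R^d, and suppose there is C > 0 with P(B(t, r)) ≥ C ω_d r^d for all t ∈ T and all sufficiently small r > 0. If {ε_n} satisfies ε_n → 0 and n ε_n^d / log n → ∞, and if T admits minimal coverings by balls of radius ε/2 of cardinality at most A ε^{1−d}, then P(∃ t ∈ T : no sample point lies in B(t, ε_n)) ≤ A' ε_n^{1−d} exp(−K n ε_n^d) for constants A', K > 0, and these probabilities are summable in n. -/

import Mathlib

open Metric Set MeasureTheory Filter
open scoped ENNReal

/-- under standardness of `P` on `T`, a covering bound for `T`, and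
`ε_n → 0`, `n ε_n^d / log n → ∞`, the probability that some point of `T` has no
sample point within `ε_n` is at most `A' ε_n^{1-d} exp(-K n ε_n^d)`, and these
probabilities are summable. -/
theorem empty_ball_probability_bound (d : ℕ) (hd : 0 < d)
    (P : Measure (EuclideanSpace ℝ (Fin d))) [IsProbabilityMeasure P]
    (T : Set (EuclideanSpace ℝ (Fin d)))
    (C r0 : ℝ) (hC : 0 < C) (hr0 : 0 < r0)
    (hstd : ∀ t ∈ T, ∀ r : ℝ, 0 < r → r < r0 →
      ENNReal.ofReal (C * r ^ d) * volume (closedBall (0 : EuclideanSpace ℝ (Fin d)) 1)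
        ≤ P (closedBall t r))
    (ε : ℕ → ℝ) (hεpos : ∀ n, 0 < ε n)
    (hε0 : Tendsto ε atTop (nhds 0))
    (hεn : Tendsto (fun n => n * ε n ^ d / Real.log n) atTop atTop)
    (A ε1 : ℝ) (hA : 0 < A) (hε1 : 0 < ε1)
    (hcover : ∀ e : ℝ, 0 < e → e < ε1 →
      ∃ s : Finset (EuclideanSpace ℝ (Fin d)), ↑s ⊆ T ∧
        (s.card : ℝ) ≤ A * e ^ ((1 : ℤ) - d) ∧ T ⊆ ⋃ x ∈ s, closedBall x (e / 2)) :
    ∃ A' K : ℝ, 0 < A' ∧ 0 < K ∧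
      (∀ᶠ n in atTop,
        (Measure.pi fun _ : Fin n => P) {x | ∃ t ∈ T, ∀ i, ε n < dist (x i) t}
          ≤ ENNReal.ofReal (A' * ε n ^ ((1 : ℤ) - d) * Real.exp (-K * n * ε n ^ d))) ∧
      Summable (fun n =>
        ((Measure.pi fun _ : Fin n => P) {x | ∃ t ∈ T, ∀ i, ε n < dist (x i) t}).toReal) := by
  classical
  have hnt : Nontrivial (EuclideanSpace ℝ (Fin d)) := by
    have h0 : (0:ℕ) < Module.finrank ℝ (EuclideanSpace ℝ (Fin d)) := by simp [hd]
    exact Module.nontrivial_of_finrank_pos h0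
  set ω : ℝ := (volume (closedBall (0 : EuclideanSpace ℝ (Fin d)) 1)).toReal with hωdef
  have hωpos : 0 < ω := by
    rw [hωdef, ENNReal.toReal_pos_iff]
    exact ⟨measure_closedBall_pos _ _ one_pos, measure_closedBall_lt_top⟩
  set K : ℝ := C * ω / 2 ^ d with hKdef
  have hKpos : 0 < K := by positivity
  have hvol : volume (closedBall (0 : EuclideanSpace ℝ (Fin d)) 1) = ENNReal.ofReal ω :=
    (ENNReal.ofReal_toReal measure_closedBall_lt_top.ne).symm
  -- The key quantitative bound
  have key : ∀ n : ℕ, ε n < ε1 → ε n < r0 →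
      (Measure.pi fun _ : Fin n => P) {x | ∃ t ∈ T, ∀ i, ε n < dist (x i) t}
        ≤ ENNReal.ofReal (A * ε n ^ ((1 : ℤ) - d) * Real.exp (-K * n * ε n ^ d)) := by
    intro n h1 h2
    have hepos : 0 < ε n := hεpos n
    set e : ℝ := ε n with hedef
    obtain ⟨s, hsT, hcard, hTcov⟩ := hcover e hepos h1
    have hsub : {x : Fin n → EuclideanSpace ℝ (Fin d) | ∃ t ∈ T, ∀ i, e < dist (x i) t}
        ⊆ ⋃ c ∈ s, univ.pi (fun _ : Fin n => (closedBall c (e/2))ᶜ) := by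
      rintro x ⟨t, htT, hx⟩
      obtain ⟨c, hc, htc⟩ := mem_iUnion₂.1 (hTcov htT)
      refine mem_iUnion₂.2 ⟨c, hc, ?_⟩
      intro i _
      simp only [mem_compl_iff, mem_closedBall]
      intro hcontra
      have htri := dist_triangle (x i) c t
      have h1' : dist t c ≤ e / 2 := mem_closedBall.1 htc
      have h2' : e < dist (x i) t := hx i
      rw [dist_comm t c] at h1'
      linarith
    have hterm : ∀ c ∈ s,
        (Measure.pi fun _ : Fin n => P) (univ.pi (fun _ : Fin n => (closedBall c (e/2))ᶜ))
          ≤ ENNReal.ofReal (Real.exp (-K * n * e ^ d)) := by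
      intro c hc
      have hcT : c ∈ T := hsT hc
      have hstd' := hstd c hcT (e/2) (by positivity) (by linarith)
      have hKe : K * e ^ d = C * (e/2) ^ d * ω := by
        rw [hKdef]; field_simp; rw [← mul_pow]; congr 1; ring
      have hp : ENNReal.ofReal (K * e ^ d) ≤ P (closedBall c (e/2)) := by
        calc ENNReal.ofReal (K * e ^ d)
            = ENNReal.ofReal (C * (e/2) ^ d) * ENNReal.ofReal ω := by
              rw [← ENNReal.ofReal_mul (by positivity), hKe]
          _ = ENNReal.ofReal (C * (e/2) ^ d)
              * volume (closedBall (0 : EuclideanSpace ℝ (Fin d)) 1) := by rw [hvol]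
          _ ≤ P (closedBall c (e/2)) := hstd'
      have hcompl : P (closedBall c (e/2))ᶜ ≤ ENNReal.ofReal (Real.exp (-(K * e ^ d))) := by
        rw [prob_compl_eq_one_sub measurableSet_closedBall]
        calc (1 : ℝ≥0∞) - P (closedBall c (e/2))
            ≤ 1 - ENNReal.ofReal (K * e ^ d) := tsub_le_tsub_left hp 1
          _ = ENNReal.ofReal (1 - K * e ^ d) := by
              rw [ENNReal.ofReal_sub _ (by positivity), ENNReal.ofReal_one]
          _ ≤ ENNReal.ofReal (Real.exp (-(K * e ^ d))) := by
              refine ENNReal.ofReal_le_ofReal ?_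
              linarith [Real.add_one_le_exp (-(K * e ^ d))]
      rw [Measure.pi_pi]
      simp only [Finset.prod_const, Finset.card_univ, Fintype.card_fin]
      calc P (closedBall c (e/2))ᶜ ^ n
          ≤ ENNReal.ofReal (Real.exp (-(K * e ^ d))) ^ n :=
            pow_le_pow_left₀ (by positivity) hcompl n
        _ = ENNReal.ofReal (Real.exp (-(K * e ^ d)) ^ n) :=
            (ENNReal.ofReal_pow (Real.exp_nonneg _) n).symm
        _ = ENNReal.ofReal (Real.exp (-K * n * e ^ d)) := by
            rw [← Real.exp_nat_mul]; congr 1; ring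
    calc (Measure.pi fun _ : Fin n => P) {x | ∃ t ∈ T, ∀ i, e < dist (x i) t}
        ≤ (Measure.pi fun _ : Fin n => P)
            (⋃ c ∈ s, univ.pi (fun _ : Fin n => (closedBall c (e/2))ᶜ)) := measure_mono hsub
      _ ≤ ∑ c ∈ s, (Measure.pi fun _ : Fin n => P)
            (univ.pi (fun _ : Fin n => (closedBall c (e/2))ᶜ)) := measure_biUnion_finset_le _ _
      _ ≤ ∑ _c ∈ s, ENNReal.ofReal (Real.exp (-K * n * e ^ d)) := Finset.sum_le_sum hterm
      _ = (s.card : ℝ≥0∞) * ENNReal.ofReal (Real.exp (-K * n * e ^ d)) := by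
          rw [Finset.sum_const, nsmul_eq_mul]
      _ ≤ ENNReal.ofReal (A * e ^ ((1 : ℤ) - d) * Real.exp (-K * n * e ^ d)) := by
          rw [← ENNReal.ofReal_natCast, ← ENNReal.ofReal_mul (Nat.cast_nonneg _)]
          exact ENNReal.ofReal_le_ofReal
            (mul_le_mul_of_nonneg_right hcard (Real.exp_nonneg _))
  -- eventual smallness of ε
  have hev1 : ∀ᶠ n in atTop, ε n < ε1 := hε0.eventually_lt_const hε1
  have hev2 : ∀ᶠ n in atTop, ε n < r0 := hε0.eventually_lt_const hr0
  have hev3 : ∀ᶠ n in atTop, ε n < 1 := hε0.eventually_lt_const one_pos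
  refine ⟨A, K, hA, hKpos, ?_, ?_⟩
  · filter_upwards [hev1, hev2] with n hn1 hn2
    exact key n hn1 hn2
  · -- summability
    have hsummand : Summable (fun n : ℕ => 1 / (n:ℝ) ^ 2) :=
      Real.summable_one_div_nat_pow.2 one_lt_two
    refine summable_of_isBigO_nat hsummand ?_
    rw [Asymptotics.isBigO_iff]
    refine ⟨A, ?_⟩
    have hev4 : ∀ᶠ n : ℕ in atTop, ((d:ℝ)+2)/K + 1 ≤ n * ε n ^ d / Real.log n :=
      hεn.eventually_ge_atTop _
    filter_upwards [hev1, hev2, hev3, hev4, eventually_ge_atTop 3] with n hn1 hn2 hn3 hn4 hn5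
    have hepos : 0 < ε n := hεpos n
    set e : ℝ := ε n with hedef
    have hn0 : (0:ℝ) < n := by positivity
    have hn1' : (1:ℝ) ≤ (n:ℝ) := by exact_mod_cast Nat.one_le_of_lt hn5
    have hn3' : (3:ℝ) ≤ (n:ℝ) := by exact_mod_cast hn5
    have hlogpos : (0:ℝ) < Real.log n := Real.log_pos (by linarith)
    have hlog1 : (1:ℝ) ≤ Real.log n := by
      rw [Real.le_log_iff_exp_le hn0]
      calc Real.exp 1 ≤ 2.7182818286 := Real.exp_one_lt_d9.le
        _ ≤ (n:ℝ) := by linarith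
    have hne' : (((d:ℝ)+2)/K + 1) * Real.log n ≤ (n:ℝ) * e ^ d :=
      (le_div_iff₀ hlogpos).1 hn4
    have hone : (1:ℝ) ≤ (n:ℝ) * e ^ d := by
      have hfac : (1:ℝ) ≤ ((d:ℝ)+2)/K + 1 := by
        have : (0:ℝ) ≤ ((d:ℝ)+2)/K := by positivity
        linarith
      nlinarith
    have hεd : 1/(n:ℝ) ≤ e ^ d := by
      rw [div_le_iff₀ hn0]; linarith [hone]
    have hzpow : e ^ ((1:ℤ) - d) = e / e ^ d := by
      rw [zpow_sub₀ (ne_of_gt hepos), zpow_one, zpow_natCast]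
    have hzle : e ^ ((1:ℤ) - d) ≤ (n:ℝ) := by
      rw [hzpow, div_le_iff₀ (pow_pos hepos d)]
      calc e ≤ 1 := hn3.le
        _ ≤ (n:ℝ) * e ^ d := hone
        _ = (n:ℝ) * e ^ d := rfl
    have hKn : ((d:ℝ)+2) * Real.log n ≤ K * ((n:ℝ) * e ^ d) := by
      have h := mul_le_mul_of_nonneg_left hne' hKpos.le
      have heq : K * ((((d:ℝ)+2)/K + 1) * Real.log n)
          = ((d:ℝ)+2) * Real.log n + K * Real.log n := by
        field_simp
      rw [heq] at h
      nlinarith [mul_nonneg hKpos.le hlogpos.le]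
    have hexp : Real.exp (-K * n * e ^ d) ≤ 1 / (n:ℝ) ^ (d+2) := by
      have h1 : -K * n * e ^ d ≤ -(((d:ℝ)+2) * Real.log n) := by nlinarith
      calc Real.exp (-K * n * e ^ d) ≤ Real.exp (-(((d:ℝ)+2) * Real.log n)) :=
            Real.exp_le_exp.2 h1
        _ = 1 / Real.exp (((d:ℝ)+2) * Real.log n) := by rw [Real.exp_neg]; ring
        _ = 1 / (n:ℝ) ^ (d+2) := by
            congr 1
            have : ((d:ℝ)+2) * Real.log n = ((d+2 : ℕ) : ℝ) * Real.log n := by push_cast; ring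
            rw [this, Real.exp_nat_mul, Real.exp_log hn0]
    have hmain := key n hn1 hn2
    have hb : ((Measure.pi fun _ : Fin n => P) {x | ∃ t ∈ T, ∀ i, e < dist (x i) t}).toReal
        ≤ A * e ^ ((1:ℤ) - d) * Real.exp (-K * n * e ^ d) :=
      ENNReal.toReal_le_of_le_ofReal (by positivity) hmain
    have hlast : (n:ℝ) * (1 / (n:ℝ) ^ (d+2)) ≤ 1 / (n:ℝ) ^ 2 := by
      rw [mul_one_div, div_le_div_iff₀ (by positivity) (by positivity)]
      calc (n:ℝ) * (n:ℝ) ^ 2 = (n:ℝ) ^ 3 := by ring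
        _ ≤ (n:ℝ) ^ (d+2) := pow_le_pow_right₀ hn1' (by omega)
        _ = 1 * (n:ℝ) ^ (d+2) := (one_mul _).symm
    have hchain : ((Measure.pi fun _ : Fin n => P)
        {x | ∃ t ∈ T, ∀ i, e < dist (x i) t}).toReal ≤ A * (1 / (n:ℝ) ^ 2) := by
      calc ((Measure.pi fun _ : Fin n => P) {x | ∃ t ∈ T, ∀ i, e < dist (x i) t}).toReal
          ≤ A * e ^ ((1:ℤ) - d) * Real.exp (-K * n * e ^ d) := hb
        _ ≤ (A * (n:ℝ)) * (1 / (n:ℝ) ^ (d+2)) := by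
            refine mul_le_mul (mul_le_mul_of_nonneg_left hzle hA.le) hexp
              (Real.exp_nonneg _) (by positivity)
        _ = A * ((n:ℝ) * (1 / (n:ℝ) ^ (d+2))) := by ring
        _ ≤ A * (1 / (n:ℝ) ^ 2) := mul_le_mul_of_nonneg_left hlast hA.le
    rw [Real.norm_eq_abs, Real.norm_eq_abs, abs_of_nonneg ENNReal.toReal_nonneg,
      abs_of_nonneg (by positivity : (0:ℝ) ≤ 1 / (n:ℝ) ^ 2)]
    exact hchain
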